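/- The algebras 𝒪(D) (holomorphic functions on the unit disc) and 𝒪(ℂ) (entire functions) are not isomorphic as ℂ-algebras. -/

import Mathlib

/-- The ℂ-algebra `𝒪(Ω)` of holomorphic functions on `Ω`, realized as the
subalgebra of `↥Ω → ℂ` of restrictions of functions holomorphic on `Ω`. -/
def holAlg (Ω : Set ℂ) : Subalgebra ℂ (↥Ω → ℂ) where
  carrier := {f | ∃ F : ℂ → ℂ, DifferentiableOn ℂ F Ω ∧ Ω.restrict F = f}
  mul_mem' := by
    rintro f g ⟨F, hF, rfl⟩ ⟨G, hG, rfl⟩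
    exact ⟨F * G, hF.mul hG, rfl⟩
  add_mem' := by
    rintro f g ⟨F, hF, rfl⟩ ⟨G, hG, rfl⟩
    exact ⟨F + G, hF.add hG, rfl⟩
  one_mem' := ⟨fun _ => 1, differentiableOn_const 1, rfl⟩
  zero_mem' := ⟨fun _ => 0, differentiableOn_const 0, rfl⟩
  algebraMap_mem' := fun c => ⟨fun _ => c, differentiableOn_const c, rfl⟩

/-- The identity function `z ↦ z` as an element of `𝒪(Ω)`. -/
def idElem (Ω : Set ℂ) : holAlg Ω :=
  ⟨Ω.restrict id, ⟨id, differentiableOn_id, rfl⟩⟩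

set_option maxHeartbeats 1000000
set_option synthInstance.maxHeartbeats 400000

lemma holAlg_sub_apply {Ω : Set ℂ} (u v : holAlg Ω) (z : Ω) :
    (↑(u - v) : ↥Ω → ℂ) z = (↑u : ↥Ω → ℂ) z - (↑v : ↥Ω → ℂ) z := rfl

lemma holAlg_algebraMap_apply {Ω : Set ℂ} (c : ℂ) (z : Ω) :
    (↑(algebraMap ℂ (holAlg Ω) c) : ↥Ω → ℂ) z = c := rfl

lemma idElem_apply {Ω : Set ℂ} (z : Ω) : (↑(idElem Ω) : ↥Ω → ℂ) z = z := rfl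

/-- An element of `𝒪(Ω)` is a unit iff it vanishes nowhere on `Ω`. -/
lemma isUnit_holAlg_iff {Ω : Set ℂ} (u : holAlg Ω) :
    IsUnit u ↔ ∀ z : Ω, (u : ↥Ω → ℂ) z ≠ 0 := by
  constructor
  · intro hu z
    obtain ⟨v, hv⟩ := hu.exists_right_inv
    have h1 : ((u * v : holAlg Ω) : ↥Ω → ℂ) z = 1 := by rw [hv]; rfl
    exact left_ne_zero_of_mul_eq_one h1
  · intro h
    obtain ⟨F, hF, hFu⟩ := u.2
    have hFne : ∀ z ∈ Ω, F z ≠ 0 := by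
      intro z hz
      have := h ⟨z, hz⟩
      rw [← hFu] at this
      exact this
    refine IsUnit.of_mul_eq_one (a := u) ⟨Ω.restrict (fun z => (F z)⁻¹),
      ⟨fun z => (F z)⁻¹, hF.inv hFne, rfl⟩⟩ ?_
    apply Subtype.ext
    funext z
    show (u : ↥Ω → ℂ) z * (F z.1)⁻¹ = 1
    rw [← hFu]
    exact mul_inv_cancel₀ (hFne z.1 z.2)

theorem disc_and_plane_algebras_not_isomorphic :
    IsEmpty (holAlg (Metric.ball (0:ℂ) 1) ≃ₐ[ℂ] holAlg (Set.univ : Set ℂ)) := by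
  constructor
  intro e
  obtain ⟨G, hG, hGe⟩ := (e (idElem (Metric.ball (0:ℂ) 1))).2
  have hval : ∀ z : ℂ,
      (↑(e (idElem (Metric.ball (0:ℂ) 1))) : ↥(Set.univ : Set ℂ) → ℂ) ⟨z, trivial⟩ = G z :=
    fun z => (congrFun hGe ⟨z, trivial⟩).symm
  -- If `‖c‖ ≥ 1` then `id - c` is a unit in `𝒪(D)`, hence `G - c` is nonvanishing.
  have key : ∀ c : ℂ, 1 ≤ ‖c‖ → ∀ z : ℂ, G z ≠ c := by
    intro c hc z hzc
    have hu : IsUnit (idElem (Metric.ball (0:ℂ) 1) - algebraMap ℂ _ c) := by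
      rw [isUnit_holAlg_iff]
      intro w
      have hw : ‖(w : ℂ)‖ < 1 := by
        simpa [Complex.dist_eq] using Metric.mem_ball.mp w.2
      rw [holAlg_sub_apply, holAlg_algebraMap_apply, idElem_apply]
      intro h0
      rw [sub_eq_zero] at h0
      rw [h0] at hw
      linarith
    have hu2 : IsUnit (e (idElem (Metric.ball (0:ℂ) 1)) - algebraMap ℂ _ c) := by
      have := hu.map e.toAlgHom
      rwa [map_sub, AlgHom.commutes] at this
    rw [isUnit_holAlg_iff] at hu2
    apply hu2 ⟨z, trivial⟩
    rw [holAlg_sub_apply, holAlg_algebraMap_apply, hval, hzc, sub_self]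
  -- So `G` is a bounded entire function, hence constant by Liouville.
  have hGdiff : Differentiable ℂ G := differentiableOn_univ.mp hG
  have hbd : Bornology.IsBounded (Set.range G) := by
    apply Bornology.IsBounded.subset (Metric.isBounded_ball (x := (0:ℂ)) (r := 1))
    rintro - ⟨z, rfl⟩
    rw [Metric.mem_ball, Complex.dist_eq, sub_zero]
    by_contra hge
    exact key (G z) (le_of_not_gt hge) z rfl
  have hconst : ∀ z, G z = G 0 := fun z =>
    hGdiff.apply_eq_apply_of_bounded hbd z 0
  have haD : ‖G 0‖ < 1 := by
    by_contra hge
    exact key (G 0) (le_of_not_gt hge) 0 rfl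
  -- Pick `c` in the disc with `c ≠ G 0`: then `G - c` is a nonvanishing constant (a unit),
  -- but `id - c` vanishes at `c ∈ D`, contradicting unit preservation under `e.symm`.
  obtain ⟨c, hc1, hca⟩ : ∃ c : ℂ, ‖c‖ < 1 ∧ c ≠ G 0 := by
    by_cases h : G 0 = 0
    · refine ⟨1/2, by norm_num, ?_⟩
      rw [h]; norm_num
    · exact ⟨0, by norm_num, fun h0 => h h0.symm⟩
  have hu : IsUnit (e (idElem (Metric.ball (0:ℂ) 1)) - algebraMap ℂ _ c) := by
    rw [isUnit_holAlg_iff]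
    intro z
    have hz : (↑(e (idElem (Metric.ball (0:ℂ) 1))) : ↥(Set.univ : Set ℂ) → ℂ) z = G z.1 :=
      (congrFun hGe z).symm
    rw [holAlg_sub_apply, holAlg_algebraMap_apply, hz, hconst, sub_ne_zero]
    exact fun h => hca h.symm
  have hu2 : IsUnit (idElem (Metric.ball (0:ℂ) 1) - algebraMap ℂ _ c) := by
    have := hu.map e.symm.toAlgHom
    rw [map_sub, AlgHom.commutes] at this
    simpa using this
  rw [isUnit_holAlg_iff] at hu2
  have hcD : c ∈ Metric.ball (0:ℂ) 1 := by
    rw [Metric.mem_ball, Complex.dist_eq, sub_zero]; exact hc1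
  apply hu2 ⟨c, hcD⟩
  rw [holAlg_sub_apply, holAlg_algebraMap_apply, idElem_apply, sub_self]
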